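/- arXiv:1604.08573 — 5 statements merged into one kernel-verified Lean document; each statement's English description precedes it below -/
import Mathlib

section
/- Let n ≥ 1 and let ρ0 ∈ ℝ^n be nondecreasing. For every subset A ⊆ {1,…,n−1} and every index 1 ≤ i ≤ n−1, the vector B_{i,i+1}(S_A) lies in the convex hull of the finite set {S_C : C ⊆ {1,…,n−1}}. -/
/-- The averaging operator `B_{ij}` : averages the populations at vertices `i` and `j`,
leaving the other components unchanged. -/
noncomputable def avg {n : ℕ} (i j : Fin n) (ρ : Fin n → ℝ) : Fin n → ℝ :=
  fun k => if k = i ∨ k = j then (ρ i + ρ j) / 2 else ρ k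

/-- The attainable set `A(ρ0, E)`: all vectors obtained from `ρ0` by applying a finite
sequence of operators `B_{ij}` with `{i,j} ∈ E` (and `i ≠ j`). -/
def attainable (n : ℕ) (E : Set (Sym2 (Fin n))) (ρ0 : Fin n → ℝ) : Set (Fin n → ℝ) :=
  {ρ | ∃ L : List (Fin n × Fin n),
    (∀ p ∈ L, p.1 ≠ p.2 ∧ s(p.1, p.2) ∈ E) ∧
    ρ = L.foldl (fun σ p => avg p.1 p.2 σ) ρ0}

/-- The edge set of the path graph `P_n` (0-based: edges `{i, i+1}` for `i+1 < n`). -/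
def pathEdges (n : ℕ) : Set (Sym2 (Fin n)) :=
  {e | ∃ i : ℕ, ∃ h : i + 1 < n, e = s(⟨i, Nat.lt_of_succ_lt h⟩, ⟨i + 1, h⟩)}

/-- Start of the block of index `j` determined by `A` (0-based: `i ∈ A` means indices
`i` and `i+1` lie in the same block): the least `a` with `[a, j) ⊆ A`. -/
def blockStart (A : Finset ℕ) (j : ℕ) : ℕ :=
  Nat.findGreatest (fun a => a ≠ 0 ∧ (a - 1) ∉ A) j

/-- End of the block of index `j` determined by `A`: the greatest `b ≤ n - 1`
with `[j, b) ⊆ A`. -/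
def blockEnd (n : ℕ) (A : Finset ℕ) (j : ℕ) : ℕ :=
  Nat.findGreatest (fun b => ∀ m ∈ Finset.Ico j b, m ∈ A) (n - 1)

/-- The point `S_A`: on each block of consecutive indices determined by `A`, its
components all equal the average of the components of `ρ0` over that block. -/
noncomputable def SA {n : ℕ} (ρ0 : Fin n → ℝ) (A : Finset ℕ) : Fin n → ℝ :=
  fun j =>
    (∑ m ∈ Finset.Icc (blockStart A (j : ℕ)) (blockEnd n A (j : ℕ)),
        if h : m < n then ρ0 ⟨m, h⟩ else 0) /
      ((blockEnd n A (j : ℕ) - blockStart A (j : ℕ) + 1 : ℕ) : ℝ)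

/-- Apply the adjacent averaging operator `B_{p,p+1}` (0-based) if it exists. -/
noncomputable def stepAt (n : ℕ) (p : ℕ) (ρ : Fin n → ℝ) : Fin n → ℝ :=
  if h : p + 1 < n then avg ⟨p, Nat.lt_of_succ_lt h⟩ ⟨p + 1, h⟩ ρ else ρ

namespace AvgSA

noncomputable def gg (n : ℕ) (ρ0 : Fin n → ℝ) : ℕ → ℝ :=
  fun m => if h : m < n then ρ0 ⟨m, h⟩ else 0

noncomputable def XX (n : ℕ) (ρ0 : Fin n → ℝ) : ℕ → ℝ :=
  fun k => ∑ m ∈ Finset.range k, gg n ρ0 m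

lemma XX_succ (n : ℕ) (ρ0 : Fin n → ℝ) (k : ℕ) :
    XX n ρ0 (k + 1) = XX n ρ0 k + gg n ρ0 k := Finset.sum_range_succ _ _

lemma XX_sub (n : ℕ) (ρ0 : Fin n → ℝ) {r k : ℕ} (h : r ≤ k) :
    XX n ρ0 k - XX n ρ0 r = ∑ m ∈ Finset.Ico r k, gg n ρ0 m := by
  rw [Finset.sum_Ico_eq_sub _ h]; rfl

lemma blockStart_le (C : Finset ℕ) (j : ℕ) : blockStart C j ≤ j := Nat.findGreatest_le j

lemma blockStart_mem (C : Finset ℕ) (j : ℕ) :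
    ∀ m, blockStart C j ≤ m → m < j → m ∈ C := by
  intro m h1 h2
  by_contra hm
  have := Nat.findGreatest_is_greatest (P := fun a => a ≠ 0 ∧ (a - 1) ∉ C) (n := j)
    (k := m + 1) (Nat.lt_succ_of_le h1) (by omega)
  simp at this
  exact hm this

lemma blockStart_pred (C : Finset ℕ) (j : ℕ) :
    blockStart C j = 0 ∨ (blockStart C j - 1) ∉ C := by
  rcases eq_or_ne (blockStart C j) 0 with h | h
  · exact Or.inl h
  · exact Or.inr ((Nat.findGreatest_eq_iff.mp rfl).2.1 h).2

lemma blockEnd_le (n : ℕ) (C : Finset ℕ) (j : ℕ) : blockEnd n C j ≤ n - 1 :=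
  Nat.findGreatest_le _

lemma le_blockEnd (n : ℕ) (C : Finset ℕ) {j : ℕ} (hj : j ≤ n - 1) : j ≤ blockEnd n C j :=
  Nat.le_findGreatest hj (by simp)

lemma blockEnd_mem (n : ℕ) (C : Finset ℕ) (j : ℕ) :
    ∀ m, j ≤ m → m < blockEnd n C j → m ∈ C := by
  intro m h1 h2
  have h0 : blockEnd n C j ≠ 0 := by omega
  have := (Nat.findGreatest_eq_iff.mp (rfl : blockEnd n C j = _)).2.1 h0
  exact this m (Finset.mem_Ico.mpr ⟨h1, h2⟩)

lemma blockEnd_pred (n : ℕ) (C : Finset ℕ) (j : ℕ) :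
    blockEnd n C j = n - 1 ∨ blockEnd n C j ∉ C := by
  rcases eq_or_ne (blockEnd n C j) (n - 1) with h | h
  · exact Or.inl h
  · right
    have hlt : blockEnd n C j < n - 1 := lt_of_le_of_ne (blockEnd_le n C j) h
    have := Nat.findGreatest_is_greatest (P := fun b => ∀ m ∈ Finset.Ico j b, m ∈ C)
      (n := n - 1) (k := blockEnd n C j + 1) (Nat.lt_succ_self _) (by omega)
    simp only [not_forall] at this
    obtain ⟨m, hm, hmC⟩ := this
    rw [Finset.mem_Ico] at hm
    rcases eq_or_ne m (blockEnd n C j) with rfl | hne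
    · exact hmC
    · exact absurd (blockEnd_mem n C j m hm.1 (by omega)) hmC

lemma blockStart_eq (C : Finset ℕ) {u j : ℕ} (hu : u ≤ j)
    (hin : ∀ m, u ≤ m → m < j → m ∈ C) (hleft : u = 0 ∨ (u - 1) ∉ C) :
    blockStart C j = u := by
  rw [blockStart, Nat.findGreatest_eq_iff]
  refine ⟨hu, fun h0 => ⟨h0, ?_⟩, fun m hm1 hm2 hP => ?_⟩
  · rcases hleft with h | h
    · exact absurd h h0
    · exact h
  · exact hP.2 (hin (m - 1) (by omega) (by omega))

lemma blockEnd_eq (n : ℕ) (C : Finset ℕ) {v j : ℕ} (hj : j ≤ v) (hv : v ≤ n - 1)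
    (hin : ∀ m, j ≤ m → m < v → m ∈ C) (hright : v = n - 1 ∨ v ∉ C) :
    blockEnd n C j = v := by
  rw [blockEnd, Nat.findGreatest_eq_iff]
  refine ⟨hv, fun _ m hm => ?_, fun m hm1 hm2 hP => ?_⟩
  · rw [Finset.mem_Ico] at hm; exact hin m hm.1 hm.2
  · rcases hright with h | h
    · omega
    · exact h (hP v (Finset.mem_Ico.mpr ⟨hj, hm1⟩))

lemma SA_eval {n : ℕ} (ρ0 : Fin n → ℝ) (C : Finset ℕ) {u v j : ℕ} (hjn : j < n)
    (huj : u ≤ j) (hjv : j ≤ v) (hv : v ≤ n - 1)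
    (hin : ∀ m, u ≤ m → m < v → m ∈ C) (hleft : u = 0 ∨ (u - 1) ∉ C)
    (hright : v = n - 1 ∨ v ∉ C) :
    SA ρ0 C ⟨j, hjn⟩ = (∑ m ∈ Finset.Icc u v, gg n ρ0 m) / ((v - u + 1 : ℕ) : ℝ) := by
  have h1 : blockStart C j = u :=
    blockStart_eq C huj (fun m hm1 hm2 => hin m hm1 (by omega)) hleft
  have h2 : blockEnd n C j = v :=
    blockEnd_eq n C hjv hv (fun m hm1 hm2 => hin m (by omega) hm2) hright
  show (∑ m ∈ Finset.Icc (blockStart C j) (blockEnd n C j), gg n ρ0 m) / _ = _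
  rw [h1, h2]

end AvgSA

namespace AvgSA

lemma SA_split_left {n : ℕ} (ρ0 : Fin n → ℝ) (C D : Finset ℕ) (t : ℕ)
    (hC : ∀ m ∈ C, m + 2 ≤ t) (hD : ∀ m ∈ D, t ≤ m)
    {j : ℕ} (hjn : j < n) (hjt : j < t) (hj1 : j ≤ n - 1) :
    SA ρ0 (C ∪ D) ⟨j, hjn⟩ = SA ρ0 C ⟨j, hjn⟩ := by
  have hvt : blockEnd n C j < t := by
    by_contra h
    push_neg at h
    have h1 : t - 1 ∈ C := blockEnd_mem n C j (t - 1) (by omega) (by omega)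
    have := hC _ h1; omega
  have h1 : SA ρ0 (C ∪ D) ⟨j, hjn⟩ =
      (∑ m ∈ Finset.Icc (blockStart C j) (blockEnd n C j), gg n ρ0 m) /
        ((blockEnd n C j - blockStart C j + 1 : ℕ) : ℝ) := by
    apply SA_eval ρ0 (C ∪ D) hjn (blockStart_le C j) (le_blockEnd n C hj1)
      (blockEnd_le n C j)
    · intro m hm1 hm2
      apply Finset.mem_union_left
      rcases lt_or_ge m j with h | h
      · exact blockStart_mem C j m hm1 h
      · exact blockEnd_mem n C j m h hm2
    · rcases blockStart_pred C j with h | h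
      · exact Or.inl h
      · right
        intro hmem
        rcases Finset.mem_union.mp hmem with h' | h'
        · exact h h'
        · have := hD _ h'
          have := blockStart_le C j
          omega
    · rcases blockEnd_pred n C j with h | h
      · exact Or.inl h
      · right
        intro hmem
        rcases Finset.mem_union.mp hmem with h' | h'
        · exact h h'
        · have := hD _ h'; omega
  rw [h1]; rfl

lemma SA_split_right {n : ℕ} (ρ0 : Fin n → ℝ) (C D : Finset ℕ) (t : ℕ)
    (hC : ∀ m ∈ C, m + 2 ≤ t) (hD : ∀ m ∈ D, t ≤ m)
    {j : ℕ} (hjn : j < n) (hjt : t ≤ j) (hj1 : j ≤ n - 1) :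
    SA ρ0 (C ∪ D) ⟨j, hjn⟩ = SA ρ0 D ⟨j, hjn⟩ := by
  have hut : t ≤ blockStart D j := by
    rcases eq_or_lt_of_le (blockStart_le D j) with h | h
    · omega
    · exact hD _ (blockStart_mem D j _ le_rfl h)
  have h1 : SA ρ0 (C ∪ D) ⟨j, hjn⟩ =
      (∑ m ∈ Finset.Icc (blockStart D j) (blockEnd n D j), gg n ρ0 m) /
        ((blockEnd n D j - blockStart D j + 1 : ℕ) : ℝ) := by
    apply SA_eval ρ0 (C ∪ D) hjn (blockStart_le D j) (le_blockEnd n D hj1)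
      (blockEnd_le n D j)
    · intro m hm1 hm2
      apply Finset.mem_union_right
      rcases lt_or_ge m j with h | h
      · exact blockStart_mem D j m hm1 h
      · exact blockEnd_mem n D j m h hm2
    · rcases blockStart_pred D j with h | h
      · exact Or.inl h
      · right
        intro hmem
        rcases Finset.mem_union.mp hmem with h' | h'
        · have := hC _ h'; omega
        · exact h h'
    · rcases blockEnd_pred n D j with h | h
      · exact Or.inl h
      · right
        intro hmem
        rcases Finset.mem_union.mp hmem with h' | h'
        · have := hC _ h'
          have := le_blockEnd n D hj1
          omega
        · exact h h'
  rw [h1]; rfl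

lemma gg_mono {n : ℕ} {ρ0 : Fin n → ℝ} (hm : Monotone ρ0) {p q : ℕ} (hpq : p ≤ q)
    (hq : q < n) : gg n ρ0 p ≤ gg n ρ0 q := by
  have hp : p < n := by omega
  simp only [gg, dif_pos hp, dif_pos hq]
  exact hm (show (⟨p, hp⟩ : Fin n) ≤ ⟨q, hq⟩ from hpq)

lemma prefix_mean {n : ℕ} {ρ0 : Fin n → ℝ} (hm : Monotone ρ0) {u k w : ℕ}
    (hu : u ≤ k) (hk : k ≤ w + 1) (hw : w < n) :
    ((w - u + 1 : ℕ) : ℝ) * ∑ m ∈ Finset.Ico u k, gg n ρ0 m ≤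
      ((k - u : ℕ) : ℝ) * ∑ m ∈ Finset.Icc u w, gg n ρ0 m := by
  rcases eq_or_lt_of_le hu with rfl | huk
  · simp
  have hsplit : ∑ m ∈ Finset.Icc u w, gg n ρ0 m =
      (∑ m ∈ Finset.Ico u k, gg n ρ0 m) + ∑ m ∈ Finset.Ico k (w + 1), gg n ρ0 m := by
    rw [← Finset.Ico_add_one_right_eq_Icc, ← Finset.sum_Ico_consecutive _ (by omega : u ≤ k) hk]
  have h1 : ∑ m ∈ Finset.Ico u k, gg n ρ0 m ≤ ((k - u : ℕ) : ℝ) * gg n ρ0 (k - 1) := by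
    have := Finset.sum_le_card_nsmul (Finset.Ico u k) (gg n ρ0) (gg n ρ0 (k - 1))
      (fun x hx => by
        rw [Finset.mem_Ico] at hx
        exact gg_mono hm (by omega) (by omega))
    rwa [Nat.card_Ico, nsmul_eq_mul] at this
  have h2 : ((w + 1 - k : ℕ) : ℝ) * gg n ρ0 (k - 1) ≤
      ∑ m ∈ Finset.Ico k (w + 1), gg n ρ0 m := by
    have := Finset.card_nsmul_le_sum (Finset.Ico k (w + 1)) (gg n ρ0) (gg n ρ0 (k - 1))
      (fun x hx => by
        rw [Finset.mem_Ico] at hx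
        exact gg_mono hm (by omega) (by omega))
    rwa [Nat.card_Ico, nsmul_eq_mul] at this
  have hcast : ((w - u + 1 : ℕ) : ℝ) = ((k - u : ℕ) : ℝ) + ((w + 1 - k : ℕ) : ℝ) := by
    have : (w - u + 1 : ℕ) = (k - u) + (w + 1 - k) := by omega
    rw [this]; push_cast; ring
  rw [hcast, hsplit]
  have hA : (0:ℝ) ≤ ((k - u : ℕ) : ℝ) := Nat.cast_nonneg _
  have hB : (0:ℝ) ≤ ((w + 1 - k : ℕ) : ℝ) := Nat.cast_nonneg _
  nlinarith [mul_le_mul_of_nonneg_left h1 hB, mul_le_mul_of_nonneg_left h2 hA]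

end AvgSA

namespace AvgSA

lemma sum_map_mul {α : Type*} (c : ℝ) (L : List α) (f : α → ℝ) :
    (L.map fun x => c * f x).sum = c * (L.map f).sum := by
  induction L with
  | nil => simp
  | cons a L ih => simp [ih, mul_add]

lemma sum_flatMap' {α β : Type*} (L1 : List α) (F : α → List β) (f : β → ℝ) :
    ((L1.flatMap F).map f).sum = (L1.map fun a => ((F a).map f).sum).sum := by
  induction L1 with
  | nil => simp
  | cons a L ih => simp [List.flatMap_cons, ih]

lemma convex_le_zero (h : ℕ → ℝ) (r s : ℕ)
    (hconv : ∀ t, r ≤ t → t + 2 ≤ s → 2 * h (t + 1) ≤ h t + h (t + 2))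
    (hr : h r = 0) (hs : h s = 0) : ∀ t, r ≤ t → t ≤ s → h t ≤ 0 := by
  have slope : ∀ c p, r ≤ p → p + c + 1 ≤ s → h (p + 1) - h p ≤ h (p + c + 1) - h (p + c) := by
    intro c
    induction c with
    | zero => intro p _ _; simp
    | succ c ih =>
      intro p hp hs'
      have h1 := ih p hp (by omega)
      have h2 := hconv (p + c) (by omega) (by omega)
      have e1 : p + (c + 1) + 1 = p + c + 2 := by ring
      have e2 : p + (c + 1) = p + c + 1 := by ring
      rw [e1, e2]
      linarith
  have tel : ∀ p q, p ≤ q → h q - h p = ∑ m ∈ Finset.Ico p q, (h (m + 1) - h m) := by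
    intro p q hpq
    induction q, hpq using Nat.le_induction with
    | base => simp
    | succ q hq ih => rw [Finset.sum_Ico_succ_top hq, ← ih]; ring
  intro t ht1 ht2
  by_contra hpos
  push_neg at hpos
  have hrt : r < t := by
    rcases eq_or_lt_of_le ht1 with rfl | h
    · rw [hr] at hpos; linarith
    · exact h
  have hts : t < s := by
    rcases eq_or_lt_of_le ht2 with rfl | h
    · rw [hs] at hpos; linarith
    · exact h
  have hsum : ∑ m ∈ Finset.Ico t s, (h (m + 1) - h m) = -h t := by
    have := tel t s (le_of_lt hts)
    rw [hs] at this; linarith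
  have hex : ∃ v ∈ Finset.Ico t s, h (v + 1) - h v < 0 := by
    by_contra hno
    push_neg at hno
    have : (0:ℝ) ≤ ∑ m ∈ Finset.Ico t s, (h (m + 1) - h m) :=
      Finset.sum_nonneg fun m hm => hno m hm
    rw [hsum] at this; linarith
  obtain ⟨v, hv, hvneg⟩ := hex
  rw [Finset.mem_Ico] at hv
  have hall : ∀ m ∈ Finset.Ico r t, h (m + 1) - h m ≤ 0 := by
    intro m hm
    rw [Finset.mem_Ico] at hm
    have := slope (v - m) m hm.1 (by omega)
    have e : m + (v - m) = v := by omega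
    rw [e] at this
    linarith
  have : h t - h r ≤ 0 := by
    rw [tel r t (le_of_lt hrt)]
    exact Finset.sum_nonpos hall
  rw [hr] at this; linarith

end AvgSA

namespace AvgSA

noncomputable def chord (n : ℕ) (ρ0 : Fin n → ℝ) (r s : ℕ) : ℕ → ℝ :=
  fun k => XX n ρ0 r + ((k - r : ℕ) : ℝ) * (XX n ρ0 s - XX n ρ0 r) / ((s - r : ℕ) : ℝ)

lemma chord_r (n : ℕ) (ρ0 : Fin n → ℝ) (r s : ℕ) : chord n ρ0 r s r = XX n ρ0 r := by
  simp [chord]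

lemma chord_s (n : ℕ) (ρ0 : Fin n → ℝ) {r s : ℕ} (h : r < s) :
    chord n ρ0 r s s = XX n ρ0 s := by
  have hne : ((s - r : ℕ) : ℝ) ≠ 0 := by
    have : 0 < s - r := by omega
    positivity
  show XX n ρ0 r + ((s - r : ℕ) : ℝ) * (XX n ρ0 s - XX n ρ0 r) / ((s - r : ℕ) : ℝ) = XX n ρ0 s
  rw [mul_div_cancel_left₀ _ hne]; ring

lemma chord_lin (n : ℕ) (ρ0 : Fin n → ℝ) (r s : ℕ) :
    ∀ k, r ≤ k → chord n ρ0 r s (k + 2) + chord n ρ0 r s k = 2 * chord n ρ0 r s (k + 1) := by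
  intro k hk
  simp only [chord]
  have e1 : (k + 2 - r : ℕ) = (k - r) + 2 := by omega
  have e2 : (k + 1 - r : ℕ) = (k - r) + 1 := by omega
  rw [e1, e2]
  push_cast
  ring

lemma chord_inc (n : ℕ) (ρ0 : Fin n → ℝ) (r s : ℕ) :
    ∀ k, r ≤ k → chord n ρ0 r s (k + 1) - chord n ρ0 r s k =
      (XX n ρ0 s - XX n ρ0 r) / ((s - r : ℕ) : ℝ) := by
  intro k hk
  simp only [chord]
  have e2 : (k + 1 - r : ℕ) = (k - r) + 1 := by omega
  rw [e2]
  push_cast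
  ring

lemma SA_Ico (n : ℕ) (ρ0 : Fin n → ℝ) {r s : ℕ} (hrs : r < s) (hsn : s ≤ n)
    {j : ℕ} (hj : j < n) (hrj : r ≤ j) (hjs : j + 1 ≤ s) :
    SA ρ0 (Finset.Ico r (s - 1)) ⟨j, hj⟩ =
      (XX n ρ0 s - XX n ρ0 r) / ((s - r : ℕ) : ℝ) := by
  have h1 : SA ρ0 (Finset.Ico r (s - 1)) ⟨j, hj⟩ =
      (∑ m ∈ Finset.Icc r (s - 1), gg n ρ0 m) / ((s - 1 - r + 1 : ℕ) : ℝ) := by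
    apply SA_eval ρ0 _ hj hrj (by omega) (by omega)
    · intro m hm1 hm2
      exact Finset.mem_Ico.mpr ⟨hm1, hm2⟩
    · rcases Nat.eq_zero_or_pos r with h | h
      · exact Or.inl h
      · right; intro hmem; rw [Finset.mem_Ico] at hmem; omega
    · right; intro hmem; rw [Finset.mem_Ico] at hmem; omega
  rw [h1]
  have e1 : (s - 1 - r + 1 : ℕ) = s - r := by omega
  have e2 : Finset.Icc r (s - 1) = Finset.Ico r s := by
    rw [← Finset.Ico_add_one_right_eq_Icc]
    congr 1
    omega
  rw [e1, e2, ← XX_sub n ρ0 (le_of_lt hrs)]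

/-- Gluing two decompositions at an interior contact point. -/
lemma glue {n : ℕ} (ρ0 : Fin n → ℝ) {r t s : ℕ} (hrt : r < t) (hts : t < s) (hsn : s ≤ n)
    (T : ℕ → ℝ) (L1 L2 : List (ℝ × Finset ℕ))
    (hL1a : ∀ p ∈ L1, 0 ≤ p.1 ∧ ∀ m ∈ p.2, r ≤ m ∧ m + 2 ≤ t)
    (hL1b : (L1.map Prod.fst).sum = 1)
    (hL1c : ∀ j (hj : j < n), r ≤ j → j + 1 ≤ t →
      T (j + 1) - T j = (L1.map fun p => p.1 * SA ρ0 p.2 ⟨j, hj⟩).sum)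
    (hL2a : ∀ p ∈ L2, 0 ≤ p.1 ∧ ∀ m ∈ p.2, t ≤ m ∧ m + 2 ≤ s)
    (hL2b : (L2.map Prod.fst).sum = 1)
    (hL2c : ∀ j (hj : j < n), t ≤ j → j + 1 ≤ s →
      T (j + 1) - T j = (L2.map fun p => p.1 * SA ρ0 p.2 ⟨j, hj⟩).sum) :
    ∃ L : List (ℝ × Finset ℕ),
      (∀ p ∈ L, 0 ≤ p.1 ∧ ∀ m ∈ p.2, r ≤ m ∧ m + 2 ≤ s) ∧
      (L.map Prod.fst).sum = 1 ∧
      ∀ j (hj : j < n), r ≤ j → j + 1 ≤ s →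
        T (j + 1) - T j = (L.map fun p => p.1 * SA ρ0 p.2 ⟨j, hj⟩).sum := by
  refine ⟨L1.flatMap fun p => L2.map fun q => (p.1 * q.1, p.2 ∪ q.2), ?_, ?_, ?_⟩
  · intro p hp
    rw [List.mem_flatMap] at hp
    obtain ⟨p1, hp1, hp'⟩ := hp
    rw [List.mem_map] at hp'
    obtain ⟨p2, hp2, rfl⟩ := hp'
    obtain ⟨h1, h1'⟩ := hL1a p1 hp1
    obtain ⟨h2, h2'⟩ := hL2a p2 hp2
    refine ⟨mul_nonneg h1 h2, fun m hm => ?_⟩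
    rcases Finset.mem_union.mp hm with h | h
    · have := h1' m h; omega
    · have := h2' m h; omega
  · rw [sum_flatMap']
    have : ∀ p1 ∈ L1, ((List.map (fun q => (p1.1 * q.1, p1.2 ∪ q.2)) L2).map Prod.fst).sum
        = p1.1 := by
      intro p1 _
      rw [List.map_map]
      have : (Prod.fst ∘ fun q : ℝ × Finset ℕ => (p1.1 * q.1, p1.2 ∪ q.2)) =
          fun q : ℝ × Finset ℕ => p1.1 * q.1 := rfl
      rw [this, sum_map_mul p1.1 L2 Prod.fst, hL2b, mul_one]
    rw [List.map_congr_left this, hL1b]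
  · intro j hj hrj hjs
    rw [sum_flatMap']
    rcases lt_or_ge j t with hcase | hcase
    · -- use L1
      rw [hL1c j hj hrj (by omega)]
      have key : ∀ p1 ∈ L1,
          ((List.map (fun q => (p1.1 * q.1, p1.2 ∪ q.2)) L2).map
            fun p => p.1 * SA ρ0 p.2 ⟨j, hj⟩).sum = p1.1 * SA ρ0 p1.2 ⟨j, hj⟩ := by
        intro p1 hp1
        rw [List.map_map]
        have hcong : ∀ q ∈ L2, ((fun p : ℝ × Finset ℕ => p.1 * SA ρ0 p.2 ⟨j, hj⟩) ∘
            fun q : ℝ × Finset ℕ => (p1.1 * q.1, p1.2 ∪ q.2)) q =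
            (p1.1 * SA ρ0 p1.2 ⟨j, hj⟩) * q.1 := by
          intro q hq
          have hsplit : SA ρ0 (p1.2 ∪ q.2) ⟨j, hj⟩ = SA ρ0 p1.2 ⟨j, hj⟩ :=
            SA_split_left ρ0 p1.2 q.2 t (fun m hm => ((hL1a p1 hp1).2 m hm).2)
              (fun m hm => ((hL2a q hq).2 m hm).1) hj hcase (by omega)
          simp only [Function.comp]
          rw [hsplit]; ring
        rw [List.map_congr_left hcong, sum_map_mul, hL2b, mul_one]
      rw [List.map_congr_left key]
    · -- use L2
      rw [hL2c j hj hcase hjs]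
      have key : ∀ p1 ∈ L1,
          ((List.map (fun q => (p1.1 * q.1, p1.2 ∪ q.2)) L2).map
            fun p => p.1 * SA ρ0 p.2 ⟨j, hj⟩).sum =
            p1.1 * (L2.map fun p => p.1 * SA ρ0 p.2 ⟨j, hj⟩).sum := by
        intro p1 hp1
        rw [List.map_map]
        have hcong : ∀ q ∈ L2, ((fun p : ℝ × Finset ℕ => p.1 * SA ρ0 p.2 ⟨j, hj⟩) ∘
            fun q : ℝ × Finset ℕ => (p1.1 * q.1, p1.2 ∪ q.2)) q =
            p1.1 * (q.1 * SA ρ0 q.2 ⟨j, hj⟩) := by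
          intro q hq
          have hsplit : SA ρ0 (p1.2 ∪ q.2) ⟨j, hj⟩ = SA ρ0 q.2 ⟨j, hj⟩ :=
            SA_split_right ρ0 p1.2 q.2 t (fun m hm => ((hL1a p1 hp1).2 m hm).2)
              (fun m hm => ((hL2a q hq).2 m hm).1) hj hcase (by omega)
          simp only [Function.comp]
          rw [hsplit]; ring
        rw [List.map_congr_left hcong, sum_map_mul]
      rw [List.map_congr_left key]
      have hc : (fun a : ℝ × Finset ℕ =>
          a.1 * (L2.map fun p => p.1 * SA ρ0 p.2 ⟨j, hj⟩).sum) =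
          fun a : ℝ × Finset ℕ =>
            (L2.map fun p => p.1 * SA ρ0 p.2 ⟨j, hj⟩).sum * a.1 := by
        funext a; ring
      rw [hc, sum_map_mul _ L1 Prod.fst, hL1b, mul_one]
  
end AvgSA

namespace AvgSA


lemma sum_univ_get {α : Type*} (L : List α) (f : α → ℝ) :
    ∑ k : Fin L.length, f (L.get k) = (L.map f).sum := by
  induction L with
  | nil => simp
  | cons x L ih =>
    have h : ∑ k : Fin (L.length + 1), f ((x :: L).get k) =
        f x + ∑ k : Fin L.length, f (L.get k) := by
      rw [Fin.sum_univ_succ]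
      rfl
    rw [List.map_cons, List.sum_cons, ← ih]
    exact h

lemma KL {n : ℕ} (ρ0 : Fin n → ℝ) (hm : Monotone ρ0) :
    ∀ d r s, s - r ≤ d → r < s → s ≤ n →
    ∀ T : ℕ → ℝ,
    (∀ t, r ≤ t → t + 2 ≤ s → 2 * T (t + 1) ≤ T t + T (t + 2)) →
    (∀ t, r ≤ t → t ≤ s → XX n ρ0 t ≤ T t) →
    T r = XX n ρ0 r → T s = XX n ρ0 s →
    ∃ L : List (ℝ × Finset ℕ),
      (∀ p ∈ L, 0 ≤ p.1 ∧ ∀ m ∈ p.2, r ≤ m ∧ m + 2 ≤ s) ∧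
      (L.map Prod.fst).sum = 1 ∧
      ∀ j (hj : j < n), r ≤ j → j + 1 ≤ s →
        T (j + 1) - T j = (L.map fun p => p.1 * SA ρ0 p.2 ⟨j, hj⟩).sum := by
  intro d
  induction d using Nat.strong_induction_on with
  | _ d IH =>
  intro r s hd hrs hsn T hconv hge hTr hTs
  by_cases hchord : ∀ k, r ≤ k → k ≤ s → T k = chord n ρ0 r s k
  · refine ⟨[(1, Finset.Ico r (s - 1))], ?_, by simp, ?_⟩
    · intro p hp
      rw [List.mem_singleton] at hp
      subst hp
      refine ⟨by norm_num, fun m hmem => ?_⟩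
      rw [Finset.mem_Ico] at hmem
      omega
    · intro j hj hrj hjs
      rw [hchord (j + 1) (by omega) hjs, hchord j hrj (by omega),
        chord_inc n ρ0 r s j hrj, ← SA_Ico n ρ0 hrs hsn hj hrj hjs]
      simp
  by_cases hcontact : ∃ t, r < t ∧ t < s ∧ T t = XX n ρ0 t
  · obtain ⟨t, hrt, hts, hTt⟩ := hcontact
    obtain ⟨L1, hL1a, hL1b, hL1c⟩ := IH (t - r) (by omega) r t (by omega) hrt (by omega) T
      (fun u h1 h2 => hconv u h1 (by omega)) (fun u h1 h2 => hge u h1 (by omega)) hTr hTt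
    obtain ⟨L2, hL2a, hL2b, hL2c⟩ := IH (s - t) (by omega) t s (by omega) hts hsn T
      (fun u h1 h2 => hconv u (by omega) h2) (fun u h1 h2 => hge u (by omega) h2) hTt hTs
    exact glue ρ0 hrt hts hsn T L1 L2 hL1a hL1b hL1c hL2a hL2b hL2c
  · push_neg at hcontact
    have hrs2 : r + 2 ≤ s := by
      by_contra hc
      apply hchord
      intro k h1 h2
      have : k = r ∨ k = s := by omega
      rcases this with rfl | rfl
      · rw [hTr, chord_r]
      · rw [hTs, chord_s n ρ0 hrs]
    have hstrict : ∀ t, r < t → t < s → XX n ρ0 t < T t := by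
      intro t h1 h2
      rcases eq_or_lt_of_le (hge t (by omega) (by omega)) with h | h
      · exact absurd h.symm (hcontact t h1 h2)
      · exact h
    have hTle : ∀ t, r ≤ t → t ≤ s → T t ≤ chord n ρ0 r s t := by
      have h0 := convex_le_zero (fun k => T k - chord n ρ0 r s k) r s
        (fun t h1 h2 => by
          have h3 := hconv t h1 h2
          have h4 := chord_lin n ρ0 r s t h1
          linarith)
        (by simp only [hTr, chord_r]; ring) (by simp only [hTs, chord_s n ρ0 hrs]; ring)
      intro t h1 h2
      have := h0 t h1 h2
      linarith
    have hIoo : (Finset.Ioo r s).Nonempty := ⟨r + 1, by rw [Finset.mem_Ioo]; omega⟩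
    set ratio := fun t =>
      (T t - XX n ρ0 t) / (chord n ρ0 r s t - XX n ρ0 t) with hratio
    set lam := (Finset.Ioo r s).inf' hIoo ratio with hlamdef
    have hden : ∀ t ∈ Finset.Ioo r s, 0 < chord n ρ0 r s t - XX n ρ0 t := by
      intro t ht
      rw [Finset.mem_Ioo] at ht
      have h1 := hstrict t ht.1 ht.2
      have h2 := hTle t (by omega) (by omega)
      linarith
    have hlampos : 0 < lam := by
      rw [hlamdef, Finset.lt_inf'_iff]
      intro t ht
      have h2 := hden t ht
      rw [Finset.mem_Ioo] at ht
      have h1 := hstrict t ht.1 ht.2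
      exact div_pos (by linarith) h2
    have hlamle : ∀ t ∈ Finset.Ioo r s,
        lam * (chord n ρ0 r s t - XX n ρ0 t) ≤ T t - XX n ρ0 t := by
      intro t ht
      have h1 : lam ≤ ratio t := Finset.inf'_le ratio ht
      have h2 := hden t ht
      have h3 : ratio t * (chord n ρ0 r s t - XX n ρ0 t) = T t - XX n ρ0 t := by
        rw [hratio]
        field_simp
      nlinarith
    have hlamlt1 : lam < 1 := by
      push_neg at hchord
      obtain ⟨k, hk1, hk2, hk3⟩ := hchord
      have hkr : r < k := by
        rcases eq_or_lt_of_le hk1 with rfl | h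
        · exact absurd (by rw [hTr, chord_r]) hk3
        · exact h
      have hks : k < s := by
        rcases eq_or_lt_of_le hk2 with rfl | h
        · exact absurd (by rw [hTs, chord_s n ρ0 hrs]) hk3
        · exact h
      have hmem : k ∈ Finset.Ioo r s := Finset.mem_Ioo.mpr ⟨hkr, hks⟩
      have hklt : T k < chord n ρ0 r s k := lt_of_le_of_ne (hTle k hk1 hk2) hk3
      have hr1 : ratio k < 1 := by
        rw [hratio]
        rw [div_lt_one (hden k hmem)]
        linarith
      exact lt_of_le_of_lt (Finset.inf'_le ratio hmem) hr1
    have h1lam : 0 < 1 - lam := by linarith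
    set T' := fun k => (T k - lam * chord n ρ0 r s k) / (1 - lam) with hT'def
    have hT'r : T' r = XX n ρ0 r := by
      rw [hT'def]
      simp only [chord_r, hTr]
      rw [div_eq_iff (ne_of_gt h1lam)]
      ring
    have hT's : T' s = XX n ρ0 s := by
      rw [hT'def]
      simp only [chord_s n ρ0 hrs, hTs]
      rw [div_eq_iff (ne_of_gt h1lam)]
      ring
    have hT'conv : ∀ t, r ≤ t → t + 2 ≤ s → 2 * T' (t + 1) ≤ T' t + T' (t + 2) := by
      intro t h1 h2
      have e1 : 2 * T' (t + 1) =
          (2 * T (t + 1) - lam * (2 * chord n ρ0 r s (t + 1))) / (1 - lam) := by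
        rw [hT'def]; ring
      have e2 : T' t + T' (t + 2) =
          (T t + T (t + 2) - lam * (chord n ρ0 r s t + chord n ρ0 r s (t + 2))) /
            (1 - lam) := by
        rw [hT'def]; ring
      rw [e1, e2, div_le_div_iff_of_pos_right h1lam]
      have h3 := hconv t h1 h2
      have h4 := chord_lin n ρ0 r s t h1
      nlinarith
    have hT'ge : ∀ t, r ≤ t → t ≤ s → XX n ρ0 t ≤ T' t := by
      intro t h1 h2
      rcases eq_or_lt_of_le h1 with rfl | h1'
      · rw [hT'r]
      rcases eq_or_lt_of_le h2 with rfl | h2'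
      · rw [hT's]
      have h3 := hlamle t (Finset.mem_Ioo.mpr ⟨h1', h2'⟩)
      rw [hT'def]
      simp only
      rw [le_div_iff₀ h1lam]
      linarith
    obtain ⟨tstar, htmem, htval⟩ := Finset.exists_mem_eq_inf' hIoo ratio
    have htmem' := htmem
    rw [Finset.mem_Ioo] at htmem'
    have hT'tstar : T' tstar = XX n ρ0 tstar := by
      have hd2 := hden tstar htmem
      have heq : T tstar - XX n ρ0 tstar =
          lam * (chord n ρ0 r s tstar - XX n ρ0 tstar) := by
        have : lam = ratio tstar := by rw [hlamdef, htval]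
        rw [this, hratio]
        field_simp
      rw [hT'def]
      simp only
      rw [div_eq_iff (ne_of_gt h1lam)]
      linarith
    obtain ⟨L1, hL1a, hL1b, hL1c⟩ := IH (tstar - r) (by omega) r tstar (by omega)
      htmem'.1 (by omega) T'
      (fun u h1 h2 => hT'conv u h1 (by omega)) (fun u h1 h2 => hT'ge u h1 (by omega))
      hT'r hT'tstar
    obtain ⟨L2, hL2a, hL2b, hL2c⟩ := IH (s - tstar) (by omega) tstar s (by omega)
      htmem'.2 hsn T'
      (fun u h1 h2 => hT'conv u (by omega) h2) (fun u h1 h2 => hT'ge u (by omega) h2)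
      hT'tstar hT's
    obtain ⟨L', hL'a, hL'b, hL'c⟩ :=
      glue ρ0 htmem'.1 htmem'.2 hsn T' L1 L2 hL1a hL1b hL1c hL2a hL2b hL2c
    refine ⟨(lam, Finset.Ico r (s - 1)) :: L'.map fun p => ((1 - lam) * p.1, p.2),
      ?_, ?_, ?_⟩
    · intro p hp
      rcases List.mem_cons.mp hp with rfl | hp'
      · refine ⟨le_of_lt hlampos, fun m hmem => ?_⟩
        rw [Finset.mem_Ico] at hmem
        omega
      · rw [List.mem_map] at hp'
        obtain ⟨q, hq, rfl⟩ := hp'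
        obtain ⟨hq1, hq2⟩ := hL'a q hq
        exact ⟨mul_nonneg (by linarith) hq1, hq2⟩
    · simp only [List.map_cons, List.sum_cons, List.map_map]
      have e : (Prod.fst ∘ fun p : ℝ × Finset ℕ => ((1 - lam) * p.1, p.2)) =
          fun p : ℝ × Finset ℕ => (1 - lam) * p.1 := rfl
      rw [e, sum_map_mul (1 - lam) L' Prod.fst, hL'b]
      ring
    · intro j hj hrj hjs
      have hTj : T (j + 1) - T j =
          lam * (chord n ρ0 r s (j + 1) - chord n ρ0 r s j) +
            (1 - lam) * (T' (j + 1) - T' j) := by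
        rw [hT'def]
        simp only
        field_simp
        ring
      simp only [List.map_cons, List.sum_cons, List.map_map]
      have e : ((fun p : ℝ × Finset ℕ => p.1 * SA ρ0 p.2 ⟨j, hj⟩) ∘
          fun p : ℝ × Finset ℕ => ((1 - lam) * p.1, p.2)) =
          fun p : ℝ × Finset ℕ => (1 - lam) * (p.1 * SA ρ0 p.2 ⟨j, hj⟩) := by
        funext p
        simp only [Function.comp]
        ring
      rw [e, sum_map_mul (1 - lam) L' (fun p => p.1 * SA ρ0 p.2 ⟨j, hj⟩),
        ← hL'c j hj hrj hjs, hTj]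
      have e2 : chord n ρ0 r s (j + 1) - chord n ρ0 r s j =
          SA ρ0 (Finset.Ico r (s - 1)) ⟨j, hj⟩ := by
        rw [chord_inc n ρ0 r s j hrj, SA_Ico n ρ0 hrs hsn hj hrj hjs]
      rw [e2]

end AvgSA


open AvgSA

/-- For nondecreasing `ρ0`, every subset `A ⊆ {1, …, n-1}` and every adjacent pair
`(i, i+1)`, the vector `B_{i,i+1}(S_A)` lies in the convex hull of the finite set
`{S_C : C ⊆ {1, …, n-1}}`. -/
theorem avg_SA_mem_convexHull_SA (n : ℕ) (hn : 1 ≤ n)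
    (ρ0 : Fin n → ℝ) (hρ0 : Monotone ρ0)
    (A : Finset ℕ) (hA : A ⊆ Finset.range (n - 1))
    (i : ℕ) (hi : i + 1 < n) :
    avg ⟨i, Nat.lt_of_succ_lt hi⟩ ⟨i + 1, hi⟩ (SA ρ0 A) ∈
      convexHull ℝ {τ | ∃ C ⊆ Finset.range (n - 1), τ = SA ρ0 C} := by
  have hin : i < n := Nat.lt_of_succ_lt hi
  have hn2 : 2 ≤ n := by omega
  by_cases hiA : i ∈ A
  · -- i and i+1 in the same block: avg does nothing
    have hbe : i + 1 ≤ blockEnd n A i := Nat.le_findGreatest (by omega)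
      (by intro m hm
          rw [Finset.mem_Ico] at hm
          have hmi : m = i := by omega
          rwa [hmi])
    have hform : ∀ (j : ℕ) (hj : j < n), blockStart A i ≤ j → j ≤ blockEnd n A i →
        SA ρ0 A ⟨j, hj⟩ = (∑ m ∈ Finset.Icc (blockStart A i) (blockEnd n A i), gg n ρ0 m) /
          ((blockEnd n A i - blockStart A i + 1 : ℕ) : ℝ) := by
      intro j hj h1 h2
      apply SA_eval ρ0 A hj h1 h2 (blockEnd_le n A i)
      · intro m hm1 hm2
        rcases lt_or_ge m i with h | h
        · exact blockStart_mem A i m hm1 h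
        · exact blockEnd_mem n A i m h hm2
      · rcases blockStart_pred A i with h | h
        · exact Or.inl h
        · exact Or.inr h
      · exact blockEnd_pred n A i
    have heq : SA ρ0 A ⟨i, hin⟩ = SA ρ0 A ⟨i + 1, hi⟩ := by
      rw [hform i hin (blockStart_le A i) (by omega),
        hform (i + 1) hi (by have := blockStart_le A i; omega) hbe]
    have havg : avg ⟨i, hin⟩ ⟨i + 1, hi⟩ (SA ρ0 A) = SA ρ0 A := by
      funext k
      simp only [avg]
      split_ifs with h
      · rcases h with h | h
        · subst h; rw [← heq]; ring
        · subst h; rw [← heq]; ring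
      · rfl
    rw [havg]
    exact subset_convexHull ℝ _ ⟨A, hA, rfl⟩
  · -- main case
    set a := blockStart A i with hadef
    set b := blockEnd n A (i + 1) with hbdef
    have ha_le : a ≤ i := blockStart_le A i
    have hb_ge : i + 1 ≤ b := le_blockEnd n A (by omega)
    have hb_le : b ≤ n - 1 := blockEnd_le n A (i + 1)
    have hedges1 : ∀ m, a ≤ m → m < i → m ∈ A := blockStart_mem A i
    have hedges2 : ∀ m, i + 1 ≤ m → m < b → m ∈ A := blockEnd_mem n A (i + 1)
    have ha_pred : a = 0 ∨ a - 1 ∉ A := blockStart_pred A i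
    have hb_pred : b ∉ A := by
      rcases blockEnd_pred n A (i + 1) with h | h
      · intro hmem
        have := hA hmem
        rw [Finset.mem_range] at this
        omega
      · exact h
    set S1 := ∑ m ∈ Finset.Icc a i, gg n ρ0 m with hS1def
    set D1 := ((i - a + 1 : ℕ) : ℝ) with hD1def
    set S2 := ∑ m ∈ Finset.Icc (i + 1) b, gg n ρ0 m with hS2def
    set D2 := ((b - (i + 1) + 1 : ℕ) : ℝ) with hD2def
    set μ1 := S1 / D1 with hμ1def
    set μ2 := S2 / D2 with hμ2def
    have hD1pos : (0 : ℝ) < D1 := by rw [hD1def]; positivity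
    have hD2pos : (0 : ℝ) < D2 := by rw [hD2def]; positivity
    have hSA1 : ∀ (j : ℕ) (hj : j < n), a ≤ j → j ≤ i → SA ρ0 A ⟨j, hj⟩ = μ1 := by
      intro j hj h1 h2
      rw [hμ1def, hS1def, hD1def]
      apply SA_eval ρ0 A hj h1 h2 (by omega) (fun m hm1 hm2 => hedges1 m hm1 hm2)
        ha_pred (Or.inr hiA)
    have hSA2 : ∀ (j : ℕ) (hj : j < n), i + 1 ≤ j → j ≤ b → SA ρ0 A ⟨j, hj⟩ = μ2 := by
      intro j hj h1 h2
      rw [hμ2def, hS2def, hD2def]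
      apply SA_eval ρ0 A hj h1 h2 hb_le (fun m hm1 hm2 => hedges2 m hm1 hm2)
        (Or.inr (by simpa using hiA)) (Or.inr hb_pred)
    have hμ1i : μ1 ≤ gg n ρ0 i := by
      have h := Finset.sum_le_card_nsmul (Finset.Icc a i) (gg n ρ0) (gg n ρ0 i)
        (fun x hx => by
          rw [Finset.mem_Icc] at hx
          exact gg_mono hρ0 hx.2 hin)
      rw [Nat.card_Icc, nsmul_eq_mul] at h
      rw [hμ1def, div_le_iff₀ hD1pos, hD1def]
      calc S1 ≤ ((i + 1 - a : ℕ) : ℝ) * gg n ρ0 i := h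
        _ = gg n ρ0 i * ((i - a + 1 : ℕ) : ℝ) := by
            rw [show (i + 1 - a : ℕ) = i - a + 1 by omega]; ring
    have hμ2i : gg n ρ0 (i + 1) ≤ μ2 := by
      have h := Finset.card_nsmul_le_sum (Finset.Icc (i + 1) b) (gg n ρ0) (gg n ρ0 (i + 1))
        (fun x hx => by
          rw [Finset.mem_Icc] at hx
          exact gg_mono hρ0 hx.1 (by omega))
      rw [Nat.card_Icc, nsmul_eq_mul] at h
      rw [hμ2def, le_div_iff₀ hD2pos, hD2def]
      calc gg n ρ0 (i + 1) * ((b - (i + 1) + 1 : ℕ) : ℝ)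
          = ((b + 1 - (i + 1) : ℕ) : ℝ) * gg n ρ0 (i + 1) := by
            rw [show (b + 1 - (i + 1) : ℕ) = b - (i + 1) + 1 by omega]; ring
        _ ≤ S2 := h
    have hμμ : μ1 ≤ μ2 :=
      le_trans hμ1i (le_trans (gg_mono hρ0 (by omega) hi) hμ2i)
    -- the averaged vector
    set v := avg ⟨i, hin⟩ ⟨i + 1, hi⟩ (SA ρ0 A) with hvdef
    set vfun : ℕ → ℝ := fun k => if h : k < n then v ⟨k, h⟩ else 0 with hvfundef
    have hvfun_ne : ∀ (k : ℕ) (hk : k < n), k ≠ i → k ≠ i + 1 →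
        vfun k = SA ρ0 A ⟨k, hk⟩ := by
      intro k hk h1 h2
      rw [hvfundef]
      simp only [dif_pos hk]
      rw [hvdef]
      simp only [avg]
      rw [if_neg]
      rw [not_or]
      constructor <;> (rw [Fin.ext_iff]; simpa)
    have hvfun_mid : vfun i = (μ1 + μ2) / 2 ∧ vfun (i + 1) = (μ1 + μ2) / 2 := by
      constructor <;>
      · rw [hvfundef]
        simp only [dif_pos hin, dif_pos hi]
        rw [hvdef]
        simp only [avg]
        rw [if_pos (by simp [Fin.ext_iff])]
        rw [hSA1 i hin ha_le le_rfl, hSA2 (i + 1) hi le_rfl hb_ge]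
    have hv1 : ∀ k, a ≤ k → k < i → vfun k = μ1 := by
      intro k h1 h2
      rw [hvfun_ne k (by omega) (by omega) (by omega)]
      exact hSA1 k (by omega) h1 (by omega)
    have hv2 : ∀ k, i + 2 ≤ k → k ≤ b → vfun k = μ2 := by
      intro k h1 h2
      rw [hvfun_ne k (by omega) (by omega) (by omega)]
      exact hSA2 k (by omega) (by omega) h2
    -- partial sums of v
    set T : ℕ → ℝ := fun k => XX n ρ0 a + ∑ m ∈ Finset.Ico a k, vfun m with hTdef
    have hTstep : ∀ k, a ≤ k → T (k + 1) = T k + vfun k := by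
      intro k hk
      rw [hTdef]
      simp only
      rw [Finset.sum_Ico_succ_top hk]
      ring
    have hD1ne : D1 ≠ 0 := ne_of_gt hD1pos
    have hD2ne : D2 ≠ 0 := ne_of_gt hD2pos
    have e1 : D1 = ((i - a : ℕ) : ℝ) + 1 := by rw [hD1def]; push_cast; ring
    have Xsum1 : ∑ m ∈ Finset.Ico a (i + 1), gg n ρ0 m = D1 * μ1 := by
      rw [Finset.Ico_add_one_right_eq_Icc, hμ1def, ← hS1def, mul_div_cancel₀ _ hD1ne]
    have Xsum2 : ∑ m ∈ Finset.Ico (i + 1) (b + 1), gg n ρ0 m = D2 * μ2 := by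
      rw [Finset.Ico_add_one_right_eq_Icc, hμ2def, ← hS2def, mul_div_cancel₀ _ hD2ne]
    have hsum1 : ∀ k, a ≤ k → k ≤ i →
        ∑ m ∈ Finset.Ico a k, vfun m = ((k - a : ℕ) : ℝ) * μ1 := by
      intro k h1 h2
      have hc : ∀ x ∈ Finset.Ico a k, vfun x = μ1 := by
        intro x hx
        rw [Finset.mem_Ico] at hx
        exact hv1 x hx.1 (by omega)
      rw [Finset.sum_congr rfl hc, Finset.sum_const, Nat.card_Ico, nsmul_eq_mul]
    have hsumi1 : ∑ m ∈ Finset.Ico a (i + 1), vfun m =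
        ((i - a : ℕ) : ℝ) * μ1 + (μ1 + μ2) / 2 := by
      rw [Finset.sum_Ico_succ_top ha_le, hsum1 i ha_le le_rfl, hvfun_mid.1]
    have hsumi2 : ∑ m ∈ Finset.Ico a (i + 2), vfun m =
        ((i - a : ℕ) : ℝ) * μ1 + μ1 + μ2 := by
      rw [show i + 2 = (i + 1) + 1 by ring, Finset.sum_Ico_succ_top (by omega), hsumi1,
        hvfun_mid.2]
      ring
    have hsumhi : ∀ k, i + 2 ≤ k → k ≤ b + 1 → ∑ m ∈ Finset.Ico a k, vfun m =
        ((i - a : ℕ) : ℝ) * μ1 + μ1 + μ2 + ((k - (i + 2) : ℕ) : ℝ) * μ2 := by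
      intro k h1 h2
      rw [← Finset.sum_Ico_consecutive _ (show a ≤ i + 2 by omega) h1, hsumi2]
      have hc : ∀ x ∈ Finset.Ico (i + 2) k, vfun x = μ2 := by
        intro x hx
        rw [Finset.mem_Ico] at hx
        exact hv2 x hx.1 (by omega)
      rw [Finset.sum_congr rfl hc, Finset.sum_const, Nat.card_Ico, nsmul_eq_mul]
    have hTa : T a = XX n ρ0 a := by rw [hTdef]; simp
    have hTb : T (b + 1) = XX n ρ0 (b + 1) := by
      have h1 := hsumhi (b + 1) (by omega) le_rfl
      have h2 : XX n ρ0 (b + 1) - XX n ρ0 a = D1 * μ1 + D2 * μ2 := by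
        rw [XX_sub n ρ0 (show a ≤ b + 1 by omega),
          ← Finset.sum_Ico_consecutive _ (show a ≤ i + 1 by omega)
            (show i + 1 ≤ b + 1 by omega), Xsum1, Xsum2]
      rw [hTdef]
      simp only
      rw [h1]
      have e2 : D2 = ((b + 1 - (i + 2) : ℕ) : ℝ) + 1 := by
        rw [hD2def, show (b - (i + 1) + 1 : ℕ) = (b + 1 - (i + 2)) + 1 by omega]
        push_cast
        ring
      rw [e1, e2] at h2
      linarith
    have hprefix1 : ∀ k, a ≤ k → k ≤ i + 1 →
        ∑ m ∈ Finset.Ico a k, gg n ρ0 m ≤ ((k - a : ℕ) : ℝ) * μ1 := by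
      intro k h1 h2
      have h := prefix_mean hρ0 (u := a) (k := k) (w := i) h1 (by omega) hin
      rw [hμ1def, ← mul_div_assoc, le_div_iff₀ hD1pos]
      rw [← hS1def] at h
      calc (∑ m ∈ Finset.Ico a k, gg n ρ0 m) * D1
          = ((i - a + 1 : ℕ) : ℝ) * ∑ m ∈ Finset.Ico a k, gg n ρ0 m := by
            rw [hD1def]; ring
        _ ≤ ((k - a : ℕ) : ℝ) * S1 := h
    have hprefix2 : ∀ k, i + 1 ≤ k → k ≤ b + 1 →
        ∑ m ∈ Finset.Ico (i + 1) k, gg n ρ0 m ≤ ((k - (i + 1) : ℕ) : ℝ) * μ2 := by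
      intro k h1 h2
      have h := prefix_mean hρ0 (u := i + 1) (k := k) (w := b) h1 (by omega) (by omega)
      rw [hμ2def, ← mul_div_assoc, le_div_iff₀ hD2pos]
      rw [← hS2def] at h
      calc (∑ m ∈ Finset.Ico (i + 1) k, gg n ρ0 m) * D2
          = ((b - (i + 1) + 1 : ℕ) : ℝ) * ∑ m ∈ Finset.Ico (i + 1) k, gg n ρ0 m := by
            rw [hD2def]; ring
        _ ≤ ((k - (i + 1) : ℕ) : ℝ) * S2 := h
    have hTge : ∀ t, a ≤ t → t ≤ b + 1 → XX n ρ0 t ≤ T t := by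
      intro t h1 h2
      have hX := XX_sub n ρ0 h1
      rw [hTdef]
      simp only
      rcases le_or_gt t i with hcase | hcase
      · rw [hsum1 t h1 hcase]
        have := hprefix1 t h1 (by omega)
        linarith
      · rcases eq_or_lt_of_le (show i + 1 ≤ t by omega) with heq | hlt
        · rw [← heq] at hX ⊢
          rw [hsumi1, Xsum1] at *
          rw [Xsum1] at hX
          rw [e1] at hX
          linarith [hμμ]
        · rw [hsumhi t (by omega) h2]
          have hXt : XX n ρ0 t - XX n ρ0 a =
              D1 * μ1 + ∑ m ∈ Finset.Ico (i + 1) t, gg n ρ0 m := by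
            rw [hX, ← Finset.sum_Ico_consecutive _ (show a ≤ i + 1 by omega)
              (show i + 1 ≤ t by omega), Xsum1]
          have hp := hprefix2 t (by omega) h2
          have e3 : ((t - (i + 1) : ℕ) : ℝ) = ((t - (i + 2) : ℕ) : ℝ) + 1 := by
            rw [show (t - (i + 1) : ℕ) = (t - (i + 2)) + 1 by omega]
            push_cast
            ring
          rw [e3] at hp
          rw [e1] at hXt
          linarith [hμμ]
    have hTconv : ∀ t, a ≤ t → t + 2 ≤ b + 1 → 2 * T (t + 1) ≤ T t + T (t + 2) := by
      intro t h1 h2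
      rw [show t + 2 = (t + 1) + 1 by ring, hTstep (t + 1) (by omega), hTstep t h1]
      have hmono : vfun t ≤ vfun (t + 1) := by
        by_cases c1 : t + 1 < i
        · rw [hv1 t h1 (by omega), hv1 (t + 1) (by omega) c1]
        · by_cases c2 : t + 1 = i
          · rw [hv1 t h1 (by omega), c2, hvfun_mid.1]
            linarith [hμμ]
          · by_cases c3 : t = i
            · rw [c3, hvfun_mid.1, hvfun_mid.2]
            · by_cases c4 : t = i + 1
              · rw [c4, hvfun_mid.2, show i + 1 + 1 = i + 2 by ring,
                  hv2 (i + 2) le_rfl (by omega)]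
                linarith [hμμ]
              · rw [hv2 t (by omega) (by omega), hv2 (t + 1) (by omega) (by omega)]
      linarith
    obtain ⟨L, hLa, hLb, hLc⟩ := KL ρ0 hρ0 (b + 1 - a) a (b + 1) le_rfl (by omega)
      (by omega) T hTconv hTge hTa hTb
    have hcomp : ∀ (j : ℕ) (hj : j < n), a ≤ j → j ≤ b →
        vfun j = (L.map fun p => p.1 * SA ρ0 p.2 ⟨j, hj⟩).sum := by
      intro j hj h1 h2
      have h := hLc j hj h1 (by omega)
      rw [hTstep j h1] at h
      linarith
    -- outer parts of A
    set AL := A.filter (fun m => m < a) with hALdef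
    set AR := A.filter (fun m => b ≤ m) with hARdef
    have hALm : ∀ m ∈ AL, m + 2 ≤ a := by
      intro m hm
      rw [hALdef, Finset.mem_filter] at hm
      rcases ha_pred with h | h
      · omega
      · have : m ≠ a - 1 := fun he => h (he ▸ hm.1)
        omega
    have hARm : ∀ m ∈ AR, b + 1 ≤ m := by
      intro m hm
      rw [hARdef, Finset.mem_filter] at hm
      have : m ≠ b := fun he => hb_pred (he ▸ hm.1)
      omega
    have hALsub : ∀ m ∈ AL, m ∈ A := fun m hm => (Finset.mem_filter.mp hm).1
    have hARsub : ∀ m ∈ AR, m ∈ A := fun m hm => (Finset.mem_filter.mp hm).1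
    have hAeqL : AL ∪ A.filter (fun m => a ≤ m) = A := by
      rw [hALdef]
      ext m
      simp only [Finset.mem_union, Finset.mem_filter]
      constructor
      · rintro (⟨h, _⟩ | ⟨h, _⟩) <;> exact h
      · intro h
        rcases lt_or_ge m a with hc | hc
        · exact Or.inl ⟨h, hc⟩
        · exact Or.inr ⟨h, hc⟩
    have hAeqR : A.filter (fun m => m < b) ∪ AR = A := by
      rw [hARdef]
      ext m
      simp only [Finset.mem_union, Finset.mem_filter]
      constructor
      · rintro (⟨h, _⟩ | ⟨h, _⟩) <;> exact h
      · intro h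
        rcases lt_or_ge m b with hc | hc
        · exact Or.inl ⟨h, hc⟩
        · exact Or.inr ⟨h, hc⟩
    have houtL : ∀ (j : ℕ) (hj : j < n), j < a → SA ρ0 A ⟨j, hj⟩ = SA ρ0 AL ⟨j, hj⟩ := by
      intro j hj hja
      conv_lhs => rw [← hAeqL]
      exact SA_split_left ρ0 AL _ a hALm (fun m hm => (Finset.mem_filter.mp hm).2)
        hj hja (by omega)
    have houtR : ∀ (j : ℕ) (hj : j < n), b < j → SA ρ0 A ⟨j, hj⟩ = SA ρ0 AR ⟨j, hj⟩ := by
      intro j hj hjb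
      conv_lhs => rw [← hAeqR]
      exact SA_split_right ρ0 _ AR (b + 1)
        (fun m hm => by have := (Finset.mem_filter.mp hm).2; omega)
        hARm hj (by omega) (by omega)
    have hunion_ge : ∀ p ∈ L, ∀ m ∈ p.2 ∪ AR, a ≤ m := by
      intro p hp m hm
      rcases Finset.mem_union.mp hm with h | h
      · exact ((hLa p hp).2 m h).1
      · have := hARm m h; omega
    have hC'L : ∀ p ∈ L, ∀ (j : ℕ) (hj : j < n), j < a →
        SA ρ0 (AL ∪ (p.2 ∪ AR)) ⟨j, hj⟩ = SA ρ0 AL ⟨j, hj⟩ := by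
      intro p hp j hj hja
      exact SA_split_left ρ0 AL _ a hALm (hunion_ge p hp) hj hja (by omega)
    have hC'M : ∀ p ∈ L, ∀ (j : ℕ) (hj : j < n), a ≤ j → j ≤ b →
        SA ρ0 (AL ∪ (p.2 ∪ AR)) ⟨j, hj⟩ = SA ρ0 p.2 ⟨j, hj⟩ := by
      intro p hp j hj h1 h2
      rw [SA_split_right ρ0 AL _ a hALm (hunion_ge p hp) hj h1 (by omega)]
      exact SA_split_left ρ0 p.2 AR (b + 1) (fun m hm => ((hLa p hp).2 m hm).2)
        hARm hj (by omega) (by omega)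
    have hC'R : ∀ p ∈ L, ∀ (j : ℕ) (hj : j < n), b < j →
        SA ρ0 (AL ∪ (p.2 ∪ AR)) ⟨j, hj⟩ = SA ρ0 AR ⟨j, hj⟩ := by
      intro p hp j hj hjb
      rw [SA_split_right ρ0 AL _ a hALm (hunion_ge p hp) hj (by omega) (by omega)]
      exact SA_split_right ρ0 p.2 AR (b + 1) (fun m hm => ((hLa p hp).2 m hm).2)
        hARm hj (by omega) (by omega)
    -- weights
    have hw1 : ∑ k : Fin L.length, (L.get k).1 = 1 := by
      rw [sum_univ_get L Prod.fst, hLb]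
    have hmemL : ∀ k : Fin L.length, L.get k ∈ L := fun k => List.get_mem L k
    have hvjExpr : ∀ (jv : ℕ) (hjlt : jv < n), jv ≠ i → jv ≠ i + 1 →
        v ⟨jv, hjlt⟩ = SA ρ0 A ⟨jv, hjlt⟩ := by
      intro jv hjlt h1 h2
      rw [hvdef]
      simp only [avg]
      rw [if_neg]
      rw [not_or]
      constructor <;> (rw [Fin.ext_iff]; simpa)
    have hveq : v = ∑ k : Fin L.length, (L.get k).1 • SA ρ0 (AL ∪ ((L.get k).2 ∪ AR)) := by
      funext j
      rw [Finset.sum_apply]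
      simp only [Pi.smul_apply, smul_eq_mul]
      obtain ⟨jv, hjlt⟩ := j
      rcases lt_or_ge jv a with hcase | hcase
      · rw [hvjExpr jv hjlt (by omega) (by omega), houtL jv hjlt hcase]
        rw [Finset.sum_congr rfl (fun k _ => by
          rw [hC'L _ (hmemL k) jv hjlt hcase])]
        rw [← Finset.sum_mul, hw1, one_mul]
      rcases le_or_gt jv b with hcase2 | hcase2
      · -- middle
        have hvv : v ⟨jv, hjlt⟩ = vfun jv := by
          rw [hvfundef]
          simp only [dif_pos hjlt]
        rw [hvv, hcomp jv hjlt hcase hcase2]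
        rw [Finset.sum_congr rfl (fun k _ => by
          rw [hC'M _ (hmemL k) jv hjlt hcase hcase2])]
        rw [sum_univ_get L (fun p => p.1 * SA ρ0 p.2 ⟨jv, hjlt⟩)]
      · -- right
        rw [hvjExpr jv hjlt (by omega) (by omega), houtR jv hjlt hcase2]
        rw [Finset.sum_congr rfl (fun k _ => by
          rw [hC'R _ (hmemL k) jv hjlt hcase2])]
        rw [← Finset.sum_mul, hw1, one_mul]
    suffices hvmem : v ∈ convexHull ℝ {τ | ∃ C ⊆ Finset.range (n - 1), τ = SA ρ0 C} by
      exact hvmem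
    rw [hveq]
    have hmem := Finset.centerMass_mem_convexHull
      (s := {τ | ∃ C ⊆ Finset.range (n - 1), τ = SA ρ0 C})
      (Finset.univ : Finset (Fin L.length))
      (w := fun k => (L.get k).1)
      (z := fun k => SA ρ0 (AL ∪ ((L.get k).2 ∪ AR)))
      (fun k _ => (hLa _ (hmemL k)).1)
      (by rw [hw1]; norm_num)
      (fun k _ => by
        refine ⟨AL ∪ ((L.get k).2 ∪ AR), ?_, rfl⟩
        intro m hm
        rw [Finset.mem_range]
        rcases Finset.mem_union.mp hm with h | h
        · have := hA (hALsub m h); rw [Finset.mem_range] at this; omega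
        rcases Finset.mem_union.mp h with h | h
        · have := ((hLa _ (hmemL k)).2 m h).2
          omega
        · have := hA (hARsub m h); rw [Finset.mem_range] at this; omega)
    rwa [Finset.centerMass_eq_of_sum_1 _ _ hw1] at hmem
end

section
/- Let G be a connected simple graph on the vertex set {1,…,n} with edge set E, and let ρ0 ∈ ℝ^n. Then the constant vector all of whose components equal (ρ0_1 + ⋯ + ρ0_n)/n lies in the topological closure of the attainable set A(ρ0, E). -/
section Aux

variable {n : ℕ}

lemma avg_continuous (i j : Fin n) : Continuous (avg i j) := by
  refine continuous_pi fun k => ?_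
  unfold avg
  by_cases h : k = i ∨ k = j
  · simp only [if_pos h]; fun_prop
  · simp only [if_neg h]; exact continuous_apply k

lemma avg_apply_i (i j : Fin n) (ρ : Fin n → ℝ) : avg i j ρ i = (ρ i + ρ j) / 2 := by
  simp [avg]

lemma avg_apply_j (i j : Fin n) (ρ : Fin n → ℝ) : avg i j ρ j = (ρ i + ρ j) / 2 := by
  simp [avg]

lemma avg_apply_other (i j k : Fin n) (h : ¬(k = i ∨ k = j)) (ρ : Fin n → ℝ) :
    avg i j ρ k = ρ k := by simp [avg, h]

lemma sum_f_avg (i j : Fin n) (hij : i ≠ j) (f : ℝ → ℝ) (ρ : Fin n → ℝ) :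
    ∑ k, f (avg i j ρ k) =
      ∑ k, f (ρ k) + (f ((ρ i + ρ j) / 2) - f (ρ i)) + (f ((ρ i + ρ j) / 2) - f (ρ j)) := by
  set g : Fin n → ℝ := fun k => f (avg i j ρ k) - f (ρ k) with hg
  have hsub : ({i, j} : Finset (Fin n)) ⊆ Finset.univ := Finset.subset_univ _
  have hzero : ∀ k ∈ Finset.univ, k ∉ ({i, j} : Finset (Fin n)) → g k = 0 := by
    intro k _ hk
    have hk' : ¬(k = i ∨ k = j) := by
      simp only [Finset.mem_insert, Finset.mem_singleton] at hk
      exact hk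
    simp [hg, avg_apply_other i j k hk']
  have h1 : ∑ k ∈ ({i, j} : Finset (Fin n)), g k = ∑ k, g k :=
    Finset.sum_subset hsub hzero
  have h2 : ∑ k ∈ ({i, j} : Finset (Fin n)), g k = g i + g j := Finset.sum_pair hij
  have h3 : ∑ k, g k = ∑ k, f (avg i j ρ k) - ∑ k, f (ρ k) := by
    simp [hg, Finset.sum_sub_distrib]
  have h4 : g i = f ((ρ i + ρ j) / 2) - f (ρ i) := by
    simp [hg, avg_apply_i]
  have h5 : g j = f ((ρ i + ρ j) / 2) - f (ρ j) := by
    simp [hg, avg_apply_j]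
  rw [h4, h5] at h2
  rw [h1, h3] at h2
  linarith

lemma sum_avg (i j : Fin n) (hij : i ≠ j) (ρ : Fin n → ℝ) :
    ∑ k, avg i j ρ k = ∑ k, ρ k := by
  have := sum_f_avg i j hij (fun x => x) ρ
  linarith

lemma sum_sq_avg (i j : Fin n) (hij : i ≠ j) (ρ : Fin n → ℝ) :
    ∑ k, (avg i j ρ k) ^ 2 = ∑ k, (ρ k) ^ 2 - (ρ i - ρ j) ^ 2 / 2 := by
  have := sum_f_avg i j hij (fun x => x ^ 2) ρ
  rw [this]; ring

lemma attainable_avg {E : Set (Sym2 (Fin n))} {ρ0 ρ : Fin n → ℝ}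
    (h : ρ ∈ attainable n E ρ0) (i j : Fin n) (hij : i ≠ j) (he : s(i, j) ∈ E) :
    avg i j ρ ∈ attainable n E ρ0 := by
  obtain ⟨L, hL, hρ⟩ := h
  refine ⟨L ++ [(i, j)], ?_, ?_⟩
  · intro p hp
    rcases List.mem_append.mp hp with h | h
    · exact hL p h
    · simp only [List.mem_singleton] at h
      subst h; exact ⟨hij, he⟩
  · simp [List.foldl_append, ← hρ]

lemma avg_bound (i j : Fin n) (ρ : Fin n → ℝ) (M : ℝ) (h : ∀ k, |ρ k| ≤ M) :
    ∀ k, |avg i j ρ k| ≤ M := by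
  intro k
  by_cases hk : k = i ∨ k = j
  · simp only [avg, if_pos hk]
    have hi := h i; have hj := h j
    rw [abs_le] at hi hj ⊢
    constructor <;> [linarith; linarith]
  · simpa [avg, hk] using h k

lemma foldl_bound (M : ℝ) :
    ∀ (L : List (Fin n × Fin n)) (ρ : Fin n → ℝ), (∀ k, |ρ k| ≤ M) →
      ∀ k, |(L.foldl (fun σ p => avg p.1 p.2 σ) ρ) k| ≤ M := by
  intro L
  induction L with
  | nil => intro ρ h k; exact h k
  | cons p L ih =>
      intro ρ h k
      exact ih _ (avg_bound p.1 p.2 ρ M h) k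

lemma foldl_sum :
    ∀ (L : List (Fin n × Fin n)) (ρ : Fin n → ℝ), (∀ p ∈ L, p.1 ≠ p.2) →
      ∑ k, (L.foldl (fun σ p => avg p.1 p.2 σ) ρ) k = ∑ k, ρ k := by
  intro L
  induction L with
  | nil => intro ρ _; rfl
  | cons p L ih =>
      intro ρ h
      have h1 := ih (avg p.1 p.2 ρ) (fun q hq => h q (List.mem_cons_of_mem _ hq))
      have h2 := sum_avg p.1 p.2 (h p List.mem_cons_self) ρ
      simpa [h2] using h1

end Aux

/-- For a connected simple graph `G` on `{1, …, n}`, the uniform vector, all of whose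
components equal the average of the components of `ρ0`, lies in the closure of the
attainable set `A(ρ0, E(G))`. -/
theorem const_avg_mem_closure_attainable (n : ℕ) (hn : 0 < n)
    (G : SimpleGraph (Fin n)) (hG : G.Connected) (ρ0 : Fin n → ℝ) :
    (fun _ : Fin n => (∑ i, ρ0 i) / (n : ℝ)) ∈
      closure (attainable n G.edgeSet ρ0) := by
  set A := attainable n G.edgeSet ρ0 with hA
  set M : ℝ := ∑ k, |ρ0 k| with hM
  have hM0 : 0 ≤ M := Finset.sum_nonneg fun k _ => abs_nonneg _
  have hρ0M : ∀ k, |ρ0 k| ≤ M :=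
    fun k => Finset.single_le_sum (fun i _ => abs_nonneg (ρ0 i)) (Finset.mem_univ k)
  -- A is bounded
  have hAball : A ⊆ Metric.closedBall 0 M := by
    intro ρ hρ
    obtain ⟨L, hL, hρeq⟩ := hρ
    rw [mem_closedBall_zero_iff, pi_norm_le_iff_of_nonneg hM0]
    intro k
    rw [hρeq]
    exact foldl_bound M L ρ0 hρ0M k
  -- closure A is compact
  have hclosed : closure A ⊆ Metric.closedBall 0 M :=
    closure_minimal hAball Metric.isClosed_closedBall
  have hcompact : IsCompact (closure A) :=
    (isCompact_closedBall (0 : Fin n → ℝ) M).of_isClosed_subset isClosed_closure hclosed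
  have hρ0A : ρ0 ∈ A := ⟨[], by simp, rfl⟩
  have hne : (closure A).Nonempty := ⟨ρ0, subset_closure hρ0A⟩
  -- minimize the sum of squares
  set Φ : (Fin n → ℝ) → ℝ := fun ρ => ∑ k, (ρ k) ^ 2 with hΦ
  have hΦcont : Continuous Φ := by
    apply continuous_finset_sum
    intro k _
    exact (continuous_apply k).pow 2
  obtain ⟨ρs, hρs, hmin⟩ := hcompact.exists_isMinOn hne hΦcont.continuousOn
  -- closure A is invariant under edge averaging
  have hinv : ∀ i j : Fin n, i ≠ j → s(i, j) ∈ G.edgeSet →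
      avg i j ρs ∈ closure A := by
    intro i j hij he
    have h1 : avg i j ρs ∈ avg i j '' closure A := Set.mem_image_of_mem _ hρs
    have h2 : avg i j '' closure A ⊆ closure (avg i j '' A) :=
      image_closure_subset_closure_image (avg_continuous i j)
    have h3 : avg i j '' A ⊆ A := by
      rintro _ ⟨ρ, hρ, rfl⟩
      exact attainable_avg hρ i j hij he
    exact closure_mono h3 (h2 h1)
  -- at the minimum, adjacent components are equal
  have hadj : ∀ a b : Fin n, G.Adj a b → ρs a = ρs b := by
    intro a b hab
    have hne' : a ≠ b := hab.ne
    have he : s(a, b) ∈ G.edgeSet := hab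
    have h1 : Φ ρs ≤ Φ (avg a b ρs) := hmin (hinv a b hne' he)
    have h2 : Φ (avg a b ρs) = Φ ρs - (ρs a - ρs b) ^ 2 / 2 :=
      sum_sq_avg a b hne' ρs
    have h3 : (ρs a - ρs b) ^ 2 ≤ 0 := by rw [h2] at h1; linarith
    have h4 : (ρs a - ρs b) ^ 2 = 0 := le_antisymm h3 (sq_nonneg _)
    have h5 : ρs a - ρs b = 0 := by
      exact pow_eq_zero_iff (by norm_num) |>.mp h4
    linarith
  -- by connectivity, the minimizer is constant
  have hconst : ∀ i j : Fin n, ρs i = ρs j := by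
    intro i j
    obtain ⟨w⟩ := hG.preconnected i j
    induction w with
    | nil => rfl
    | cons h w ih => exact (hadj _ _ h).trans ih
  -- the sum is preserved on the closure
  have hsumA : ∀ ρ ∈ A, ∑ k, ρ k = ∑ k, ρ0 k := by
    rintro ρ ⟨L, hL, rfl⟩
    exact foldl_sum L ρ0 (fun p hp => (hL p hp).1)
  have hsumcl : ∀ ρ ∈ closure A, ∑ k, ρ k = ∑ k, ρ0 k := by
    have hT : IsClosed {ρ : Fin n → ℝ | ∑ k, ρ k = ∑ k, ρ0 k} :=
      isClosed_eq (continuous_finset_sum _ fun k _ => continuous_apply k)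
        continuous_const
    intro ρ hρ
    exact closure_minimal hsumA hT hρ
  -- identify the minimizer with the uniform vector
  have hsum : ∑ k, ρs k = ∑ k, ρ0 k := hsumcl ρs hρs
  have hkey : (fun _ : Fin n => (∑ i, ρ0 i) / (n : ℝ)) = ρs := by
    funext k
    have h1 : ∑ j, ρs j = n * ρs k := by
      have : ∀ j : Fin n, ρs j = ρs k := fun j => hconst j k
      rw [Finset.sum_congr rfl fun j _ => this j]
      simp [mul_comm]
    have hn' : (n : ℝ) ≠ 0 := Nat.cast_ne_zero.mpr hn.ne'
    field_simp
    linarith [hsum, h1]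
  rw [hkey]
  exact hρs
end

section
/- Let a ≤ b ≤ c be real numbers with a < c and a + c ≤ 2b, let m = (a+b+c)/3, and set λ1 = 3(c−b)/(b+c−2a). Then 0 ≤ λ1 ≤ 1 and the following identity of triples holds: ((a+c)/2, b, (a+c)/2) = λ1·(m, m, m) + (1−λ1)·((2a+b+c)/4, (b+c)/2, (2a+b+c)/4). Equivalently, for ρ = (a,b,c) ∈ ℝ^3, B_{13}(ρ) = λ1·(m,m,m) + (1−λ1)·B_{13}(B_{23}(ρ)). -/
/-- First convexity identity: for `a ≤ b ≤ c` with `a < c` and `a + c ≤ 2b`, with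
`λ1 = 3(c−b)/(b+c−2a)` one has `0 ≤ λ1 ≤ 1` and `B_{13}(ρ)` is the convex combination
`λ1·(m,m,m) + (1−λ1)·B_{13}(B_{23}(ρ))` for `ρ = (a,b,c)`, `m = (a+b+c)/3`. -/
theorem convex_identity_one (a b c : ℝ) (hab : a ≤ b) (hbc : b ≤ c) (hac : a < c)
    (h : a + c ≤ 2 * b) :
    0 ≤ 3 * (c - b) / (b + c - 2 * a) ∧
    3 * (c - b) / (b + c - 2 * a) ≤ 1 ∧
    (![(a + c) / 2, b, (a + c) / 2] : Fin 3 → ℝ) =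
      (3 * (c - b) / (b + c - 2 * a)) •
        (![(a + b + c) / 3, (a + b + c) / 3, (a + b + c) / 3] : Fin 3 → ℝ) +
      (1 - 3 * (c - b) / (b + c - 2 * a)) •
        (![(2 * a + b + c) / 4, (b + c) / 2, (2 * a + b + c) / 4] : Fin 3 → ℝ) ∧
    avg (0 : Fin 3) 2 ![a, b, c] =
      (3 * (c - b) / (b + c - 2 * a)) •
        (![(a + b + c) / 3, (a + b + c) / 3, (a + b + c) / 3] : Fin 3 → ℝ) +
      (1 - 3 * (c - b) / (b + c - 2 * a)) •
        avg (0 : Fin 3) 2 (avg (1 : Fin 3) 2 ![a, b, c]) := by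
  have hd : 0 < b + c - 2 * a := by linarith
  have hd' : b + c - 2 * a ≠ 0 := ne_of_gt hd
  have hd'' : b + c - a * 2 ≠ 0 := by linarith
  refine ⟨div_nonneg (by linarith) hd.le, ?_, ?_, ?_⟩
  · rw [div_le_one hd]; linarith
  · funext k
    fin_cases k <;>
      simp [Matrix.cons_val_zero, Matrix.cons_val_one] <;>
      field_simp <;> ring
  · funext k
    fin_cases k <;>
      simp [avg, Fin.ext_iff, Matrix.cons_val_zero, Matrix.cons_val_one] <;>
      field_simp <;> ring
end

section
/- Let n ≥ 1, let ρ0 ∈ ℝ^n be strictly increasing (ρ0_1 < ρ0_2 < ⋯ < ρ0_n), and let A ⊆ {1,…,n−1} contain two consecutive integers i and i+1. Then S_A is not attainable in finitely many steps: S_A does not belong to the attainable set A(ρ0, E_P) of the path graph P_n (it is only an asymptotic, limit point of that set). -/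
/-- Invariant: the vector is nondecreasing, and any two components whose indices
differ by at least `2` are strictly ordered (no three consecutive equal entries). -/
def Good {n : ℕ} (ρ : Fin n → ℝ) : Prop :=
  (∀ k l : Fin n, k ≤ l → ρ k ≤ ρ l) ∧
  (∀ k l : Fin n, (k : ℕ) + 2 ≤ (l : ℕ) → ρ k < ρ l)

lemma avg_comm {n : ℕ} (i j : Fin n) (ρ : Fin n → ℝ) : avg i j ρ = avg j i ρ := by
  funext k
  simp only [avg]
  by_cases hk : k = i ∨ k = j
  · rw [if_pos hk, if_pos (Or.symm hk), add_comm]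
  · rw [if_neg hk, if_neg (fun h => hk (Or.symm h))]

lemma good_avg {n : ℕ} {ρ : Fin n → ℝ} (hρ : Good ρ) (p : ℕ) (h : p + 1 < n) :
    Good (avg ⟨p, Nat.lt_of_succ_lt h⟩ ⟨p + 1, h⟩ ρ) := by
  obtain ⟨hm, hs⟩ := hρ
  have hp : p < n := Nat.lt_of_succ_lt h
  have hPle : ρ ⟨p, hp⟩ ≤ ρ ⟨p + 1, h⟩ := hm _ _ (by simp [Fin.le_def])
  constructor
  · intro k l hkl
    rw [Fin.le_def] at hkl
    simp only [avg]
    split_ifs with h1 h2 h2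
    · exact le_rfl
    · have hk : (k : ℕ) = p ∨ (k : ℕ) = p + 1 :=
        h1.imp (fun e => by rw [e]) (fun e => by rw [e])
      push_neg at h2
      have hl1 : (l : ℕ) ≠ p := fun hh => h2.1 (Fin.ext hh)
      have hl2 : (l : ℕ) ≠ p + 1 := fun hh => h2.2 (Fin.ext hh)
      have h2l : p + 2 ≤ (l : ℕ) := by omega
      have := hm ⟨p + 1, h⟩ l (by rw [Fin.le_def]; simpa using by omega)
      linarith
    · have hl : (l : ℕ) = p ∨ (l : ℕ) = p + 1 :=
        h2.imp (fun e => by rw [e]) (fun e => by rw [e])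
      push_neg at h1
      have hk1 : (k : ℕ) ≠ p := fun hh => h1.1 (Fin.ext hh)
      have hk2 : (k : ℕ) ≠ p + 1 := fun hh => h1.2 (Fin.ext hh)
      have hkp : (k : ℕ) ≤ p := by omega
      have := hm k ⟨p, hp⟩ (by rw [Fin.le_def]; simpa using hkp)
      linarith
    · exact hm k l (by rw [Fin.le_def]; exact hkl)
  · intro k l hkl
    simp only [avg]
    split_ifs with h1 h2 h2
    · have hk : (k : ℕ) = p ∨ (k : ℕ) = p + 1 :=
        h1.imp (fun e => by rw [e]) (fun e => by rw [e])
      have hl : (l : ℕ) = p ∨ (l : ℕ) = p + 1 :=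
        h2.imp (fun e => by rw [e]) (fun e => by rw [e])
      exfalso; omega
    · have hk : (k : ℕ) = p ∨ (k : ℕ) = p + 1 :=
        h1.imp (fun e => by rw [e]) (fun e => by rw [e])
      rcases hk with hk | hk
      · have hst := hs ⟨p, hp⟩ l (by simpa using by omega)
        have := hm ⟨p + 1, h⟩ l (by rw [Fin.le_def]; simpa using by omega)
        linarith
      · have hst := hs ⟨p + 1, h⟩ l (by simpa using by omega)
        have := hm ⟨p, hp⟩ l (by rw [Fin.le_def]; simpa using by omega)
        linarith
    · have hl : (l : ℕ) = p ∨ (l : ℕ) = p + 1 :=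
        h2.imp (fun e => by rw [e]) (fun e => by rw [e])
      rcases hl with hl | hl
      · have hst := hs k ⟨p, hp⟩ (by simpa using by omega)
        linarith
      · have hst := hs k ⟨p + 1, h⟩ (by simpa using by omega)
        have := hm k ⟨p, hp⟩ (by rw [Fin.le_def]; simpa using by omega)
        linarith
    · exact hs k l hkl

lemma good_foldl {n : ℕ} (L : List (Fin n × Fin n))
    (hL : ∀ p ∈ L, p.1 ≠ p.2 ∧ s(p.1, p.2) ∈ pathEdges n)
    (ρ : Fin n → ℝ) (hρ : Good ρ) :
    Good (L.foldl (fun σ p => avg p.1 p.2 σ) ρ) := by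
  induction L generalizing ρ with
  | nil => exact hρ
  | cons a L ih =>
    simp only [List.foldl_cons]
    apply ih (fun p hp => hL p (List.mem_cons_of_mem a hp))
    obtain ⟨-, hmem⟩ := hL a (List.mem_cons_self (a := a) (l := L))
    obtain ⟨j, hj, hedge⟩ := hmem
    rw [Sym2.eq_iff] at hedge
    rcases hedge with ⟨h1, h2⟩ | ⟨h1, h2⟩
    · rw [h1, h2]; exact good_avg hρ j hj
    · rw [h1, h2, avg_comm]; exact good_avg hρ j hj

lemma findGreatest_congr {P Q : ℕ → Prop} [DecidablePred P] [DecidablePred Q]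
    (h : ∀ k, P k ↔ Q k) : ∀ n, Nat.findGreatest P n = Nat.findGreatest Q n
  | 0 => rfl
  | (n + 1) => by
    rw [Nat.findGreatest_succ, Nat.findGreatest_succ, findGreatest_congr h n]
    exact if_congr (h (n + 1)) rfl rfl

lemma blockStart_succ_of_mem {A : Finset ℕ} {j : ℕ} (hj : j ∈ A) :
    blockStart A (j + 1) = blockStart A j := by
  unfold blockStart
  rw [Nat.findGreatest_succ, if_neg (by simp [hj])]

lemma blockEnd_succ_of_mem {n : ℕ} {A : Finset ℕ} {j : ℕ} (hj : j ∈ A) :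
    blockEnd n A (j + 1) = blockEnd n A j := by
  unfold blockEnd
  apply findGreatest_congr
  intro b
  constructor
  · intro hb m hm
    rw [Finset.mem_Ico] at hm
    rcases Nat.eq_or_lt_of_le hm.1 with hlt | hlt
    · exact hlt ▸ hj
    · exact hb m (Finset.mem_Ico.mpr ⟨by omega, hm.2⟩)
  · intro hb m hm
    rw [Finset.mem_Ico] at hm
    exact hb m (Finset.mem_Ico.mpr ⟨by omega, hm.2⟩)

/-- If `ρ0` is strictly increasing and `A ⊆ {1, …, n−1}` contains two consecutive
integers `i` and `i+1`, then `S_A` is not attainable in finitely many steps on the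
path graph `P_n`. -/
theorem SA_not_attainable_of_consecutive (n : ℕ) (hn : 1 ≤ n)
    (ρ0 : Fin n → ℝ) (hρ0 : StrictMono ρ0)
    (A : Finset ℕ) (hA : A ⊆ Finset.range (n - 1))
    (i : ℕ) (hi : i ∈ A) (hi1 : i + 1 ∈ A) :
    SA ρ0 A ∉ attainable n (pathEdges n) ρ0 := by
  intro hmem
  obtain ⟨L, hL, heq⟩ := hmem
  have hi2 : i + 2 < n := by
    have := hA hi1
    rw [Finset.mem_range] at this
    omega
  have hgood : Good (SA ρ0 A) := by
    rw [heq]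
    exact good_foldl L hL ρ0
      ⟨fun k l hkl => (hρ0.monotone hkl),
       fun k l hkl => hρ0 (by rw [Fin.lt_def]; omega)⟩
  have hlt : SA ρ0 A ⟨i, by omega⟩ < SA ρ0 A ⟨i + 2, hi2⟩ :=
    hgood.2 _ _ (by simp)
  have hbs : blockStart A i = blockStart A (i + 2) := by
    rw [show i + 2 = i + 1 + 1 from rfl, blockStart_succ_of_mem hi1,
      blockStart_succ_of_mem hi]
  have hbe : blockEnd n A i = blockEnd n A (i + 2) := by
    rw [show i + 2 = i + 1 + 1 from rfl, blockEnd_succ_of_mem hi1,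
      blockEnd_succ_of_mem hi]
  have heqv : SA ρ0 A ⟨i, by omega⟩ = SA ρ0 A ⟨i + 2, hi2⟩ := by
    simp only [SA]
    rw [hbs, hbe]
  exact absurd heqv (ne_of_lt hlt)
end

section
/- Let ρ ∈ ℝ^n be nondecreasing and let i, k be indices with 1 ≤ i, k ≥ 1, i + k ≤ n, and ρ_i < ρ_{i+k}. Let T = B_{i+k−1,i+k} ∘ ⋯ ∘ B_{i+1,i+2} ∘ B_{i,i+1} be the composition of the adjacent averaging operators along the block from i to i+k, applied left to right starting with B_{i,i+1}. Then 0 ≤ (Tρ)_{i+k} − (Tρ)_i < ρ_{i+k} − ρ_i, and (Tρ)_m = ρ_m for every index m with m < i or m > i+k. -/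
lemma sweep_aux (n : ℕ) (ρ : Fin n → ℝ) (hρ : Monotone ρ) (i : ℕ) :
    ∀ m : ℕ, ∀ hm1 : 1 ≤ m, ∀ hm : i + m < n,
    (∀ j (hj : j < n), j < i ∨ i + m < j →
      ((List.range m).foldl (fun τ p => stepAt n (i + p) τ) ρ) ⟨j, hj⟩ = ρ ⟨j, hj⟩) ∧
    ((List.range m).foldl (fun τ p => stepAt n (i + p) τ) ρ) ⟨i, Nat.lt_of_le_of_lt (Nat.le_add_right i m) hm⟩ =
      (ρ ⟨i, Nat.lt_of_le_of_lt (Nat.le_add_right i m) hm⟩ + ρ ⟨i + 1, by omega⟩) / 2 ∧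
    (ρ ⟨i, Nat.lt_of_le_of_lt (Nat.le_add_right i m) hm⟩ + ρ ⟨i + 1, by omega⟩) / 2 ≤
      ((List.range m).foldl (fun τ p => stepAt n (i + p) τ) ρ) ⟨i + m, hm⟩ ∧
    ((List.range m).foldl (fun τ p => stepAt n (i + p) τ) ρ) ⟨i + m, hm⟩ ≤ ρ ⟨i + m, hm⟩ ∧
    (ρ ⟨i, Nat.lt_of_le_of_lt (Nat.le_add_right i m) hm⟩ < ρ ⟨i + m, hm⟩ →
      ((List.range m).foldl (fun τ p => stepAt n (i + p) τ) ρ) ⟨i + m, hm⟩ < ρ ⟨i + m, hm⟩) := by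
  intro m hm1
  induction m, hm1 using Nat.le_induction with
  | base =>
    intro hm
    have h1 : i + 1 < n := hm
    simp only [show List.range 1 = [0] from rfl, List.foldl_cons, List.foldl_nil, Nat.add_zero]
    rw [stepAt, dif_pos h1]
    have hle : ρ ⟨i, by omega⟩ ≤ ρ ⟨i + 1, h1⟩ := hρ (by simp [Fin.mk_le_mk])
    refine ⟨?_, ?_, ?_, ?_, ?_⟩
    · intro j hj hjout
      simp only [avg]
      split_ifs with hcond
      · rcases hcond with h' | h' <;> (simp only [Fin.mk.injEq] at h'; omega)
      · rfl
    · simp only [avg]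
      split_ifs with hcond
      · rfl
      · exact absurd (Or.inl trivial) hcond
    · simp only [avg]
      split_ifs with hcond
      · rfl
      · exact absurd (Or.inr trivial) hcond
    · simp only [avg]
      split_ifs with hcond
      · linarith
      · exact absurd (Or.inr trivial) hcond
    · intro hstrict
      simp only [avg]
      split_ifs with hcond
      · linarith
      · exact absurd (Or.inr trivial) hcond
  | succ m hm1 ih =>
    intro hm
    have hmn : i + m < n := by omega
    obtain ⟨ha, hb, hc, hd, he⟩ := ih hmn
    have hfold : (List.range (m + 1)).foldl (fun τ p => stepAt n (i + p) τ) ρ =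
        stepAt n (i + m) ((List.range m).foldl (fun τ p => stepAt n (i + p) τ) ρ) := by
      rw [List.range_succ, List.foldl_append, List.foldl_cons, List.foldl_nil]
    set F := (List.range m).foldl (fun τ p => stepAt n (i + p) τ) ρ with hF
    have hstep : stepAt n (i + m) F =
        avg ⟨i + m, by omega⟩ ⟨i + m + 1, by omega⟩ F := by
      rw [stepAt, dif_pos (by omega : i + m + 1 < n)]
    rw [hfold, hstep]
    have hFtop : F ⟨i + m + 1, by omega⟩ = ρ ⟨i + m + 1, by omega⟩ :=
      ha (i + m + 1) (by omega) (Or.inr (by omega))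
    have hmono1 : ρ ⟨i + 1, by omega⟩ ≤ ρ ⟨i + m + 1, by omega⟩ := hρ (by simp [Fin.mk_le_mk])
    have hmono2 : ρ ⟨i + m, hmn⟩ ≤ ρ ⟨i + m + 1, by omega⟩ := hρ (by simp [Fin.mk_le_mk])
    have hmono0 : ρ ⟨i, by omega⟩ ≤ ρ ⟨i + m, hmn⟩ := hρ (by simp [Fin.mk_le_mk])
    refine ⟨?_, ?_, ?_, ?_, ?_⟩
    · intro j hj hjout
      simp only [avg]
      split_ifs with hcond
      · rcases hcond with h' | h' <;> (simp only [Fin.mk.injEq] at h'; omega)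
      · rcases hjout with h' | h'
        · exact ha j hj (Or.inl h')
        · exact ha j hj (Or.inr (by omega))
    · simp only [avg]
      split_ifs with hcond
      · rcases hcond with h' | h' <;> (simp only [Fin.mk.injEq] at h'; omega)
      · exact hb
    · simp only [avg]
      split_ifs with hcond
      · rw [hFtop]; linarith
      · exact absurd (Or.inr rfl) hcond
    · simp only [avg]
      split_ifs with hcond
      · rw [hFtop]
        have : ρ ⟨i + m + 1, by omega⟩ = ρ ⟨i + (m + 1), hm⟩ := rfl
        linarith
      · exact absurd (Or.inr rfl) hcond
    · intro hstrict
      simp only [avg]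
      split_ifs with hcond
      · rw [hFtop]
        have heq : ρ ⟨i + m + 1, by omega⟩ = ρ ⟨i + (m + 1), hm⟩ := rfl
        rcases lt_or_eq_of_le hmono2 with h' | h'
        · linarith
        · have h0 : ρ ⟨i, by omega⟩ < ρ ⟨i + m, hmn⟩ := by
            rw [h', heq]; exact hstrict
          have := he h0
          linarith
      · exact absurd (Or.inr rfl) hcond

/-- Sweeping a block strictly decreases its spread: if `ρ` is nondecreasing and
`ρ_i < ρ_{i+k}`, then for `T = B_{i+k−1,i+k} ∘ ⋯ ∘ B_{i,i+1}` (applied starting with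
`B_{i,i+1}`) one has `0 ≤ (Tρ)_{i+k} − (Tρ)_i < ρ_{i+k} − ρ_i`, and `Tρ` agrees with
`ρ` outside the block `[i, i+k]`. -/
theorem block_sweep_decreases_spread (n : ℕ) (ρ : Fin n → ℝ) (hρ : Monotone ρ)
    (i k : ℕ) (hk : 1 ≤ k) (h : i + k < n)
    (hlt : ρ ⟨i, by omega⟩ < ρ ⟨i + k, h⟩) :
    0 ≤ ((List.range k).foldl (fun τ m => stepAt n (i + m) τ) ρ) ⟨i + k, h⟩ -
        ((List.range k).foldl (fun τ m => stepAt n (i + m) τ) ρ) ⟨i, by omega⟩ ∧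
    ((List.range k).foldl (fun τ m => stepAt n (i + m) τ) ρ) ⟨i + k, h⟩ -
        ((List.range k).foldl (fun τ m => stepAt n (i + m) τ) ρ) ⟨i, by omega⟩ <
      ρ ⟨i + k, h⟩ - ρ ⟨i, by omega⟩ ∧
    ∀ (m : ℕ) (hm : m < n), m < i ∨ i + k < m →
      ((List.range k).foldl (fun τ m' => stepAt n (i + m') τ) ρ) ⟨m, hm⟩ = ρ ⟨m, hm⟩ := by
  obtain ⟨ha, hb, hc, hd, he⟩ := sweep_aux n ρ hρ i k hk h
  have h01 : ρ ⟨i, by omega⟩ ≤ ρ ⟨i + 1, by omega⟩ := hρ (by simp [Fin.mk_le_mk])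
  have hstrict := he hlt
  refine ⟨by rw [hb]; linarith, by rw [hb]; linarith, ha⟩
end
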